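/- Almost surely, the modified travel cost approximates the Lyapunov exponent uniformly in direction: lim_{‖x‖_1→∞} (a_λ^q(0,x,ω_p) − α_λ^p(x))/‖x‖_1 = 0. -/

import Mathlib

open MeasureTheory Filter Real

namespace PercShape

/-- Vertices of the `d`-dimensional cubic lattice. -/
abbrev V (d : ℕ) := Fin d → ℤ

/-- The ℓ¹-norm of a lattice point. -/
noncomputable def norm1 {d : ℕ} (x : V d) : ℝ := ∑ i, |(x i : ℝ)|

/-- The ℓ¹-norm on `ℝ^d`. -/
noncomputable def norm1R {d : ℕ} (x : Fin d → ℝ) : ℝ := ∑ i, |x i|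

/-- The canonical embedding `ℤ^d → ℝ^d`. -/
def toR {d : ℕ} (x : V d) : Fin d → ℝ := fun i => (x i : ℝ)

/-- The first coordinate vector `ξ₁` of `ℝ^d`. -/
noncomputable def xi1 (d : ℕ) : Fin d → ℝ := fun i => if (i : ℕ) = 0 then 1 else 0

lemma norm1_nonneg {d : ℕ} (x : V d) : 0 ≤ norm1 x :=
  Finset.sum_nonneg fun _ _ => abs_nonneg _

lemma abs_apply_le_norm1 {d : ℕ} (x : V d) (i : Fin d) : |(x i : ℝ)| ≤ norm1 x :=
  Finset.single_le_sum (f := fun j => |(x j : ℝ)|) (fun _ _ => abs_nonneg _) (Finset.mem_univ i)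

lemma norm1_sub_comm {d : ℕ} (x y : V d) : norm1 (x - y) = norm1 (y - x) := by
  unfold norm1
  refine Finset.sum_congr rfl fun i _ => ?_
  have : ((x - y) i : ℝ) = -(((y - x) i : ℝ)) := by
    push_cast [Pi.sub_apply]; ring
  rw [this, abs_neg]

lemma norm1_le_add_sub {d : ℕ} (a b : V d) : norm1 a ≤ norm1 b + norm1 (a - b) := by
  unfold norm1
  rw [← Finset.sum_add_distrib]
  refine Finset.sum_le_sum fun i _ => ?_
  have h : ((a i : ℝ)) = (b i : ℝ) + ((a - b) i : ℝ) := by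
    push_cast [Pi.sub_apply]; ring
  calc |(a i : ℝ)| = |(b i : ℝ) + ((a - b) i : ℝ)| := by rw [← h]
    _ ≤ |(b i : ℝ)| + |((a - b) i : ℝ)| := abs_add_le _ _

lemma norm1R_toR_sub {d : ℕ} (x y : V d) : norm1R (toR x - toR y) = norm1 (x - y) := by
  unfold norm1R norm1 toR
  refine Finset.sum_congr rfl fun i _ => ?_
  congr 1
  simp [Pi.sub_apply]

lemma toR_nsmul {d : ℕ} (k : ℕ) (z : V d) : toR (k • z) = (k : ℝ) • toR z := by
  funext i
  simp only [toR, Pi.smul_apply, smul_eq_mul, nsmul_eq_mul]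
  push_cast
  ring

set_option maxHeartbeats 1000000 in
/-- The key uniform estimate for a single ε. -/
lemma key_estimate
    {d : ℕ} (hd : 2 ≤ d)
    {Ω : Type*} [MeasurableSpace Ω] (μ : Measure Ω) [IsProbabilityMeasure μ]
    (lam : ℝ) (hlam : 0 ≤ lam)
    (aq : Ω → V d → V d → ℝ)
    (chemq : Ω → V d → V d → ℝ)
    (cl : Ω → V d → V d)
    (alph : (Fin d → ℝ) → ℝ)
    (ha_nonneg : ∀ ω, ∀ x y : V d, 0 ≤ aq ω x y)
    (htri : ∀ ω, ∀ x y z : V d, aq ω x z ≤ aq ω x y + aq ω y z)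
    (hstep : ∀ ω, ∀ x y : V d,
        aq ω x y ≤ (lam + Real.log (2 * d)) * chemq ω (cl ω x) (cl ω y))
    (hhom : ∀ (c : ℝ) (x : Fin d → ℝ), alph (c • x) = |c| * alph x)
    (halphtri : ∀ x y : Fin d → ℝ, alph (x + y) ≤ alph x + alph y)
    (halph_nonneg : ∀ x, 0 ≤ alph x)
    (halph_bd : ∀ x : Fin d → ℝ, alph x ≤ alph (xi1 d) * norm1R x)
    (hrad : ∀ x : V d, ∀ᵐ ω ∂μ,
        Tendsto (fun k : ℕ => ((k : ℝ))⁻¹ * aq ω 0 (k • x)) atTop (nhds (alph (toR x))))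
    (CAP : ℝ) (hCAP : 1 ≤ CAP)
    (hmax : ∀ ε : ℝ, 0 < ε → ∀ᵐ ω ∂μ, ∃ R : ℝ, ∀ x y : V d,
        R ≤ norm1 x → norm1 (x - y) ≤ ε * norm1 x →
          chemq ω (cl ω x) (cl ω y) < 3 * CAP * ε * norm1 x)
    (ε : ℝ) (hε : 0 < ε) :
    ∀ᵐ ω ∂μ, ∃ R : ℝ, ∀ x : V d,
      R ≤ norm1 x → |aq ω 0 x - alph (toR x)| ≤ ε * norm1 x := by
  set A : ℝ := alph (xi1 d) with hA_def
  have hA : 0 ≤ A := halph_nonneg _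
  set C : ℝ := lam + Real.log (2 * d) with hC_def
  have hlog : (0:ℝ) ≤ Real.log (2 * d) := by
    apply Real.log_nonneg
    have : (2:ℝ) ≤ (d:ℝ) := by exact_mod_cast hd
    nlinarith
  have hC : 0 ≤ C := by positivity
  have hCAP0 : 0 < CAP := lt_of_lt_of_le one_pos hCAP
  clear_value A C
  have hd2 : (2:ℝ) ≤ (d:ℝ) := by exact_mod_cast hd
  have hd0 : (0:ℝ) < (d:ℝ) := by linarith
  -- the integer scale M
  set M : ℕ := max d (max (⌈3*A*d/(2*ε)⌉₊ + 1) (⌈27*C*CAP*d/(2*ε)⌉₊ + 1)) with hM_def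
  have hMd : (d:ℝ) ≤ (M:ℝ) := by exact_mod_cast le_max_left _ _
  have hM1 : 1 ≤ M := le_trans (by omega) (le_max_left d _)
  have hM1R : (1:ℝ) ≤ (M:ℝ) := by exact_mod_cast hM1
  have hM0 : (0:ℝ) < (M:ℝ) := by linarith
  have hM2 : 3*A*(d:ℝ) ≤ 2*ε*(M:ℝ) := by
    have h1 : 3*A*(d:ℝ)/(2*ε) ≤ (M:ℝ) := by
      have h2 : ⌈3*A*(d:ℝ)/(2*ε)⌉₊ ≤ M :=
        le_trans (by omega) (le_trans (le_max_left _ _) (le_max_right d _))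
      have h3 : (⌈3*A*d/(2*ε)⌉₊ : ℝ) ≤ (M:ℝ) := by exact_mod_cast h2
      exact le_trans (Nat.le_ceil _) h3
    rw [div_le_iff₀ (by positivity)] at h1
    nlinarith
  have hM3 : 27*C*CAP*(d:ℝ) ≤ 2*ε*(M:ℝ) := by
    have h1 : 27*C*CAP*(d:ℝ)/(2*ε) ≤ (M:ℝ) := by
      have h2 : ⌈27*C*CAP*(d:ℝ)/(2*ε)⌉₊ ≤ M :=
        le_trans (by omega) (le_trans (le_max_right _ _) (le_max_right d _))
      have h3 : (⌈27*C*CAP*d/(2*ε)⌉₊ : ℝ) ≤ (M:ℝ) := by exact_mod_cast h2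
      exact le_trans (Nat.le_ceil _) h3
    rw [div_le_iff₀ (by positivity)] at h1
    nlinarith
  clear_value M
  clear hM_def
  set δ : ℝ := (d:ℝ) / (M:ℝ) with hδ_def
  have hδ : 0 < δ := by positivity
  clear_value δ
  filter_upwards [hmax δ hδ, ae_all_iff.mpr hrad] with ω hmaxω hradω
  obtain ⟨R₀, hR₀⟩ := hmaxω
  -- convergence thresholds
  have hN : ∀ z : V d, ∃ N : ℕ, ∀ k ≥ N,
      dist (((k:ℝ))⁻¹ * aq ω 0 (k • z)) (alph (toR z)) < ε/3 :=
    fun z => Metric.tendsto_atTop.mp (hradω z) (ε/3) (by positivity)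
  choose N hNspec using hN
  obtain ⟨K, hK⟩ : ∃ K : ℕ, ∀ z : V d, (∀ i, |z i| ≤ 2*(M:ℤ) + (d:ℤ)) → N z ≤ K := by
    refine ⟨(Finset.Icc (fun _ => -(2*(M:ℤ)+(d:ℤ))) (fun _ => (2*(M:ℤ)+(d:ℤ)))).sup N,
      fun z hz => Finset.le_sup ?_⟩
    rw [Finset.mem_Icc]
    exact ⟨fun i => neg_le_of_abs_le (hz i), fun i => le_of_abs_le (hz i)⟩
  refine ⟨max (2*|R₀| + 2) ((M:ℝ)*((K:ℝ)+1)), fun x hx => ?_⟩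
  set n : ℝ := norm1 x with hn_def
  have hn0 : 0 ≤ n := norm1_nonneg x
  have hnR1 : 2*|R₀| + 2 ≤ n := le_trans (le_max_left _ _) hx
  have hnR2 : (M:ℝ)*((K:ℝ)+1) ≤ n := le_trans (le_max_right _ _) hx
  clear hx
  -- the integer scaling factor k
  set k : ℕ := ⌊n / (M:ℝ)⌋₊ with hk_def
  have hk1 : (k:ℝ) * (M:ℝ) ≤ n := by
    have h := Nat.floor_le (a := n / (M:ℝ)) (by positivity)
    rw [← le_div_iff₀ hM0]
    exact h
  have hk2 : n < ((k:ℝ) + 1) * (M:ℝ) := by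
    have h := Nat.lt_floor_add_one (n / (M:ℝ))
    rw [← div_lt_iff₀ hM0]
    exact_mod_cast h
  have hkK : K + 1 ≤ k := by
    apply Nat.le_floor
    rw [le_div_iff₀ hM0]
    push_cast
    linarith
  have hk0 : 1 ≤ k := by omega
  clear_value k
  clear hk_def
  have hkpos : (0:ℝ) < (k:ℝ) := by exact_mod_cast lt_of_lt_of_le one_pos hk0
  have hk1R : (1:ℝ) ≤ (k:ℝ) := by exact_mod_cast hk0
  have hkn : (k:ℝ) ≤ n := by
    have h := mul_le_mul_of_nonneg_left hM1R (le_of_lt hkpos)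
    calc (k:ℝ) = (k:ℝ) * 1 := by ring
      _ ≤ (k:ℝ) * (M:ℝ) := h
      _ ≤ n := hk1
  -- the approximating direction
  set z : V d := fun i => round ((x i : ℝ) / (k:ℝ)) with hz_def
  have hterm : ∀ i : Fin d, |((x - k • z) i : ℝ)| ≤ (k:ℝ)/2 := by
    intro i
    have h1 : ((x - k • z) i : ℝ) = (k:ℝ) * ((x i : ℝ)/(k:ℝ) - (z i : ℝ)) := by
      push_cast [Pi.sub_apply, Pi.smul_apply]
      field_simp
      simp [nsmul_eq_mul]
    rw [h1, abs_mul, abs_of_pos hkpos]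
    have h2 : |(x i : ℝ)/(k:ℝ) - (z i : ℝ)| ≤ 1/2 := by
      rw [hz_def]
      exact abs_sub_round _
    have h3 := mul_le_mul_of_nonneg_left h2 (le_of_lt hkpos)
    linarith
  have hz_abs : ∀ i : Fin d, |z i| ≤ 2*(M:ℤ) + (d:ℤ) := by
    intro i
    have ha : |(z i : ℝ) - (x i : ℝ)/(k:ℝ)| ≤ 1/2 := by
      rw [abs_sub_comm, hz_def]
      exact abs_sub_round _
    have hb : |(x i : ℝ)/(k:ℝ)| ≤ n / (k:ℝ) := by
      rw [abs_div, abs_of_pos hkpos]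
      gcongr
      exact abs_apply_le_norm1 x i
    have hc : n / (k:ℝ) ≤ 2*(M:ℝ) := by
      rw [div_le_iff₀ hkpos]
      have h5 : ((k:ℝ)+1) * (M:ℝ) ≤ (2*(M:ℝ)) * (k:ℝ) := by
        have : ((k:ℝ)+1) ≤ 2*(k:ℝ) := by linarith
        calc ((k:ℝ)+1) * (M:ℝ) ≤ (2*(k:ℝ)) * (M:ℝ) :=
              mul_le_mul_of_nonneg_right this (le_of_lt hM0)
          _ = (2*(M:ℝ)) * (k:ℝ) := by ring
      linarith
    have h1 : |(z i : ℝ)| ≤ 2*(M:ℝ) + (d:ℝ) := by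
      calc |(z i : ℝ)| = |((z i : ℝ) - (x i : ℝ)/(k:ℝ)) + (x i : ℝ)/(k:ℝ)| := by
            rw [sub_add_cancel]
        _ ≤ |(z i : ℝ) - (x i : ℝ)/(k:ℝ)| + |(x i : ℝ)/(k:ℝ)| := abs_add_le _ _
        _ ≤ 1/2 + 2*(M:ℝ) := by linarith
        _ ≤ 2*(M:ℝ) + (d:ℝ) := by linarith
    exact_mod_cast h1
  clear_value z
  clear hz_def
  set e : ℝ := norm1 (x - k • z) with he_def
  have he0 : 0 ≤ e := norm1_nonneg _
  have he : e ≤ (d:ℝ) * (k:ℝ) / 2 := by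
    have h := Finset.sum_le_sum (s := Finset.univ) (fun i _ => hterm i)
    simp only [Finset.sum_const, Finset.card_univ, Fintype.card_fin, nsmul_eq_mul] at h
    calc e ≤ (d:ℝ) * ((k:ℝ)/2) := h
      _ = (d:ℝ) * (k:ℝ) / 2 := by ring
  have hNk : N z ≤ k := by
    have h1 : N z ≤ K := hK z hz_abs
    omega
  -- Term 2 : radial convergence
  have hT2 : |aq ω 0 (k • z) - (k:ℝ) * alph (toR z)| ≤ ε/3 * n := by
    have h := hNspec z k hNk
    rw [Real.dist_eq] at h
    have heq : aq ω 0 (k • z) - (k:ℝ) * alph (toR z)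
        = (k:ℝ) * (((k:ℝ))⁻¹ * aq ω 0 (k • z) - alph (toR z)) := by
      field_simp
    rw [heq, abs_mul, abs_of_pos hkpos]
    have h2 : (k:ℝ) * |((k:ℝ))⁻¹ * aq ω 0 (k • z) - alph (toR z)| ≤ (k:ℝ) * (ε/3) :=
      mul_le_mul_of_nonneg_left (le_of_lt h) (le_of_lt hkpos)
    have h3 : (ε/3) * (k:ℝ) ≤ (ε/3) * n := mul_le_mul_of_nonneg_left hkn (by positivity)
    calc (k:ℝ) * |((k:ℝ))⁻¹ * aq ω 0 (k • z) - alph (toR z)| ≤ (k:ℝ) * (ε/3) := h2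
      _ = (ε/3) * (k:ℝ) := by ring
      _ ≤ ε/3 * n := h3
  -- Term 3 : norm comparison
  have halph_smul : alph (toR (k • z)) = (k:ℝ) * alph (toR z) := by
    rw [toR_nsmul, hhom, abs_of_pos hkpos]
  have halph_sub : ∀ u v : Fin d → ℝ, |alph u - alph v| ≤ alph (u - v) := by
    intro u v
    have hneg : alph (-(u - v)) = alph (u - v) := by
      have h := hhom (-1) (u - v)
      simpa using h
    rw [abs_sub_le_iff]
    constructor
    · have h := halphtri v (u - v)
      have h4 : alph (v + (u - v)) = alph u := by congr 1; abel
      rw [h4] at h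
      linarith
    · have h := halphtri u (v - u)
      have h2 : alph (v - u) = alph (u - v) := by
        rw [← hneg]; congr 1; abel
      have h3 : alph (u + (v - u)) = alph v := by congr 1; abel
      rw [h3, h2] at h
      linarith
  have hT3 : |(k:ℝ) * alph (toR z) - alph (toR x)| ≤ A * e := by
    rw [← halph_smul, abs_sub_comm]
    calc |alph (toR x) - alph (toR (k • z))| ≤ alph (toR x - toR (k • z)) := halph_sub _ _
      _ ≤ A * norm1R (toR x - toR (k • z)) := halph_bd _
      _ = A * e := by rw [norm1R_toR_sub, ← he_def]
  -- auxiliary norm estimates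
  have hekM : e ≤ (k:ℝ) * (M:ℝ) / 2 := by
    have h := mul_le_mul_of_nonneg_right hMd (le_of_lt hkpos)
    calc e ≤ (d:ℝ) * (k:ℝ) / 2 := he
      _ ≤ (M:ℝ) * (k:ℝ) / 2 := by linarith
      _ = (k:ℝ) * (M:ℝ) / 2 := by ring
  have hen2 : e ≤ n / 2 := by
    have := hk1
    linarith
  have hkz_lb : n/2 ≤ norm1 (k • z) := by
    have h := norm1_le_add_sub x (k • z)
    rw [← he_def, ← hn_def] at h
    linarith
  have hkz_ub : norm1 (k • z) ≤ 3/2 * n := by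
    have h := norm1_le_add_sub (k • z) x
    rw [norm1_sub_comm, ← he_def] at h
    have h2 : norm1 x = n := hn_def.symm
    linarith [h, h2.symm.le]
  have hR₀n : R₀ ≤ n := by
    have h1 : |R₀| ≤ n := by linarith [abs_nonneg R₀]
    linarith [le_abs_self R₀]
  have hR₀kz : R₀ ≤ norm1 (k • z) := by
    have h1 : |R₀| ≤ n/2 := by linarith [abs_nonneg R₀]
    linarith [le_abs_self R₀]
  -- Term 1 : chemical distance comparison
  have hchem1 : chemq ω (cl ω x) (cl ω (k • z)) < 3 * CAP * δ * n := by
    apply hR₀ x (k • z) hR₀n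
    rw [← he_def, ← hn_def]
    calc e ≤ (d:ℝ) * (k:ℝ) / 2 := he
      _ ≤ δ * n := by
        rw [hδ_def, div_mul_eq_mul_div, div_le_div_iff₀ (by norm_num) hM0]
        have h1 : ((d:ℝ) * (k:ℝ)) * (M:ℝ) = (d:ℝ) * ((k:ℝ) * (M:ℝ)) := by ring
        have h2 : (d:ℝ) * ((k:ℝ) * (M:ℝ)) ≤ (d:ℝ) * n :=
          mul_le_mul_of_nonneg_left hk1 (le_of_lt hd0)
        have h3 : 0 ≤ (d:ℝ) * n := by positivity
        linarith
  have hchem2 : chemq ω (cl ω (k • z)) (cl ω x) < 3 * CAP * δ * (3/2 * n) := by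
    have hcond : norm1 (k • z - x) ≤ δ * norm1 (k • z) := by
      rw [norm1_sub_comm, ← he_def]
      calc e ≤ (d:ℝ) * (k:ℝ) / 2 := he
        _ ≤ δ * (norm1 (k • z)) := by
          rw [hδ_def, div_mul_eq_mul_div, div_le_div_iff₀ (by norm_num) hM0]
          have h1 : (d:ℝ) * ((k:ℝ)*(M:ℝ)) ≤ (d:ℝ) * n :=
            mul_le_mul_of_nonneg_left hk1 (le_of_lt hd0)
          have h2 : (d:ℝ) * (n/2) ≤ (d:ℝ) * norm1 (k • z) :=
            mul_le_mul_of_nonneg_left hkz_lb (le_of_lt hd0)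
          linarith
    have h := hR₀ (k • z) x hR₀kz hcond
    calc chemq ω (cl ω (k • z)) (cl ω x) < 3 * CAP * δ * norm1 (k • z) := h
      _ ≤ 3 * CAP * δ * (3/2 * n) := by
        apply mul_le_mul_of_nonneg_left hkz_ub (by positivity)
  have hT1 : |aq ω 0 x - aq ω 0 (k • z)| ≤ C * (3 * CAP * δ * (3/2 * n)) := by
    have hbd : 3 * CAP * δ * n ≤ 3 * CAP * δ * (3/2 * n) := by
      apply mul_le_mul_of_nonneg_left (by linarith : n ≤ 3/2 * n) (by positivity)
    rw [abs_sub_le_iff]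
    constructor
    · have h1 := htri ω 0 (k • z) x
      have h2 := hstep ω (k • z) x
      have h3 : C * chemq ω (cl ω (k • z)) (cl ω x) ≤ C * (3 * CAP * δ * (3/2 * n)) :=
        mul_le_mul_of_nonneg_left (le_of_lt hchem2) hC
      linarith
    · have h1 := htri ω 0 x (k • z)
      have h2 := hstep ω x (k • z)
      have h3 : C * chemq ω (cl ω x) (cl ω (k • z)) ≤ C * (3 * CAP * δ * (3/2 * n)) :=
        mul_le_mul_of_nonneg_left (le_trans (le_of_lt hchem1) hbd) hC
      linarith
  -- numeric bounds on the three terms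
  have hnum1 : C * (3 * CAP * δ * (3/2 * n)) ≤ ε/3 * n := by
    rw [hδ_def]
    have h0 : C * (3 * CAP * ((d:ℝ)/(M:ℝ)) * (3/2 * n)) = (9/2) * C * CAP * (d:ℝ) * n / (M:ℝ) := by
      field_simp; ring
    rw [h0, div_le_iff₀ hM0]
    have h1 := mul_le_mul_of_nonneg_right hM3 hn0
    linarith
  have hnum3 : A * e ≤ ε/3 * n := by
    have h1 : A * e ≤ A * ((d:ℝ) * (k:ℝ) / 2) := mul_le_mul_of_nonneg_left he hA
    have h2 : 3*A*(d:ℝ)*(k:ℝ) ≤ 2*ε*(M:ℝ)*(k:ℝ) :=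
      mul_le_mul_of_nonneg_right hM2 (le_of_lt hkpos)
    have h3 : 2*ε*((k:ℝ)*(M:ℝ)) ≤ 2*ε*n :=
      mul_le_mul_of_nonneg_left hk1 (by positivity)
    linarith
  calc |aq ω 0 x - alph (toR x)|
      ≤ |aq ω 0 x - aq ω 0 (k • z)| + |aq ω 0 (k • z) - alph (toR x)| := abs_sub_le _ _ _
    _ ≤ |aq ω 0 x - aq ω 0 (k • z)| + (|aq ω 0 (k • z) - (k:ℝ) * alph (toR z)|
          + |(k:ℝ) * alph (toR z) - alph (toR x)|) := by
        linarith [abs_sub_le (aq ω 0 (k • z)) ((k:ℝ) * alph (toR z)) (alph (toR x))]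
    _ ≤ C * (3 * CAP * δ * (3/2 * n)) + (ε/3 * n + A * e) := by linarith
    _ ≤ ε/3 * n + (ε/3 * n + ε/3 * n) := by linarith
    _ = ε * n := by ring

/-- Almost surely, the modified travel cost approximates the
Lyapunov exponent uniformly in direction:
`lim_{‖x‖₁ → ∞} (a_λ^q(0,x,ω_p) - α_λ^p(x))/‖x‖₁ = 0`. -/
theorem shape_theorem_for_modified_cost
    {d : ℕ} (hd : 2 ≤ d)
    {Ω : Type*} [MeasurableSpace Ω] (μ : Measure Ω) [IsProbabilityMeasure μ]
    (lam : ℝ) (hlam : 0 ≤ lam)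
    (aq : Ω → V d → V d → ℝ)        -- `aq ω x y = a_λ^q(x,y,ω_p)`
    (chemq : Ω → V d → V d → ℝ)     -- `chemq ω x y = d_{ω_q}(x,y)`
    (cl : Ω → V d → V d)            -- the closest point map `[·]_q`
    (alph : (Fin d → ℝ) → ℝ)        -- the Lyapunov exponent `α_λ^p`
    (ha_nonneg : ∀ ω, ∀ x y : V d, 0 ≤ aq ω x y)
    (htri : ∀ ω, ∀ x y z : V d, aq ω x z ≤ aq ω x y + aq ω y z)
    -- `a_λ^q(x,y,ω_p) ≤ (λ + log 2d) d_{ω_q}([x]_q,[y]_q)`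
    (hstep : ∀ ω, ∀ x y : V d,
        aq ω x y ≤ (lam + Real.log (2 * d)) * chemq ω (cl ω x) (cl ω y))
    -- `α_λ^p` is a norm bounded by `α_λ^p(ξ₁) ‖·‖₁`
    (hhom : ∀ (c : ℝ) (x : Fin d → ℝ), alph (c • x) = |c| * alph x)
    (halphtri : ∀ x y : Fin d → ℝ, alph (x + y) ≤ alph x + alph y)
    (halph_nonneg : ∀ x, 0 ≤ alph x)
    (halph_bd : ∀ x : Fin d → ℝ, alph x ≤ alph (xi1 d) * norm1R x)
    -- radial almost-sure convergence (Kingman limit) for each lattice direction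
    (hrad : ∀ x : V d, ∀ᵐ ω ∂μ,
        Tendsto (fun k : ℕ => ((k : ℝ))⁻¹ * aq ω 0 (k • x)) atTop (nhds (alph (toR x))))
    -- the maximal chemical-distance estimate
    (CAP : ℝ) (hCAP : 1 ≤ CAP)
    (hmax : ∀ ε : ℝ, 0 < ε → ∀ᵐ ω ∂μ, ∃ R : ℝ, ∀ x y : V d,
        R ≤ norm1 x → norm1 (x - y) ≤ ε * norm1 x →
          chemq ω (cl ω x) (cl ω y) < 3 * CAP * ε * norm1 x) :
    ∀ᵐ ω ∂μ, ∀ ε : ℝ, 0 < ε → ∃ R : ℝ, ∀ x : V d,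
      R ≤ norm1 x → |aq ω 0 x - alph (toR x)| ≤ ε * norm1 x := by
  have hkey : ∀ m : ℕ, ∀ᵐ ω ∂μ, ∃ R : ℝ, ∀ x : V d,
      R ≤ norm1 x → |aq ω 0 x - alph (toR x)| ≤ (1/((m:ℝ)+1)) * norm1 x := by
    intro m
    exact key_estimate hd μ lam hlam aq chemq cl alph ha_nonneg htri hstep hhom halphtri
      halph_nonneg halph_bd hrad CAP hCAP hmax (1/((m:ℝ)+1)) (by positivity)
  filter_upwards [ae_all_iff.mpr hkey] with ω hω ε hε
  obtain ⟨m, hm⟩ := exists_nat_one_div_lt hε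
  obtain ⟨R, hR⟩ := hω m
  refine ⟨R, fun x hx => ?_⟩
  calc |aq ω 0 x - alph (toR x)| ≤ (1/((m:ℝ)+1)) * norm1 x := hR x hx
    _ ≤ ε * norm1 x := by
      apply mul_le_mul_of_nonneg_right (le_of_lt hm) (norm1_nonneg x)

end PercShape
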